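/- arXiv:2203.11928 — 2 statements merged into one kernel-verified Lean document; each statement's English description precedes it below -/
import Mathlib

section
/- Let c : ℝⁿ → ℝ be C¹, radially unbounded, with a unique critical point p* which is the global maximum, and suppose c(p) − c(p*) ≥ −κ‖∇c(p)‖² for all p and some κ > 0. Let M be a constant symmetric positive definite n×n matrix. Then p* is globally asymptotically stable for the gradient-like system ṗ = M·∇c(p). -/
open Filter RealInnerProductSpace

noncomputable section

private theorem aux_coercive {n : ℕ}
    (M : EuclideanSpace ℝ (Fin n) →L[ℝ] EuclideanSpace ℝ (Fin n))
    (hMpos : ∀ x, x ≠ 0 → 0 < ⟪M x, x⟫) :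
    ∃ lam > 0, ∀ x, lam * ‖x‖ ^ 2 ≤ ⟪M x, x⟫ := by
  by_cases hn : ∃ x : EuclideanSpace ℝ (Fin n), x ≠ 0
  · obtain ⟨x0, hx0⟩ := hn
    have hsph : (Metric.sphere (0 : EuclideanSpace ℝ (Fin n)) 1).Nonempty := by
      refine ⟨‖x0‖⁻¹ • x0, ?_⟩
      simp [norm_smul, norm_ne_zero_iff.2 hx0, inv_mul_cancel₀ (norm_ne_zero_iff.2 hx0)]
    have hcont : Continuous fun x : EuclideanSpace ℝ (Fin n) => ⟪M x, x⟫ :=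
      (M.continuous).inner continuous_id
    obtain ⟨u, hu, humin⟩ :=
      (isCompact_sphere (0 : EuclideanSpace ℝ (Fin n)) 1).exists_isMinOn hsph
        hcont.continuousOn
    have hu1 : ‖u‖ = 1 := by simpa using hu
    have hune : u ≠ 0 := by
      intro h; rw [h] at hu1; simp at hu1
    refine ⟨⟪M u, u⟫, hMpos u hune, fun x => ?_⟩
    rcases eq_or_ne x 0 with rfl | hx
    · simp
    · have hxn : ‖x‖ ≠ 0 := norm_ne_zero_iff.2 hx
      set v := ‖x‖⁻¹ • x with hv
      have hvmem : v ∈ Metric.sphere (0 : EuclideanSpace ℝ (Fin n)) 1 := by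
        simp [hv, norm_smul, abs_of_nonneg (inv_nonneg.2 (norm_nonneg x)),
          inv_mul_cancel₀ hxn]
      have hle := isMinOn_iff.1 humin v hvmem
      have hxv : x = ‖x‖ • v := by
        rw [hv, smul_smul, mul_inv_cancel₀ hxn, one_smul]
      have hMx : ⟪M x, x⟫ = ‖x‖ ^ 2 * ⟪M v, v⟫ := by
        conv_lhs => rw [hxv]
        rw [map_smul, real_inner_smul_left, real_inner_smul_right]
        ring
      rw [hMx]
      calc ⟪M u, u⟫ * ‖x‖ ^ 2 ≤ ⟪M v, v⟫ * ‖x‖ ^ 2 := by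
            apply mul_le_mul_of_nonneg_right hle (by positivity)
        _ = ‖x‖ ^ 2 * ⟪M v, v⟫ := by ring
  · push_neg at hn
    refine ⟨1, one_pos, fun x => ?_⟩
    simp [hn x]

/-- Global asymptotic stability of the unique maximizer `p*` for the gradient-like system
`ṗ = M ∇c(p)`, where `M` is symmetric positive definite, `c` is `C¹`, radially unbounded,
with unique critical point `p*` (the global maximum), satisfying
`c(p) − c(p*) ≥ −κ‖∇c(p)‖²`. Stability plus global attractivity. -/
theorem gradient_flow_GAS {n : ℕ} (c : EuclideanSpace ℝ (Fin n) → ℝ)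
    (pstar : EuclideanSpace ℝ (Fin n)) (κ : ℝ) (hκ : 0 < κ)
    (hc : ContDiff ℝ 1 c)
    (hrad : Tendsto c (Bornology.cobounded _) atBot)
    (hcrit : ∀ p, gradient c p = 0 ↔ p = pstar)
    (hmax : ∀ p, c p ≤ c pstar)
    (hineq : ∀ p, c p - c pstar ≥ -κ * ‖gradient c p‖ ^ 2)
    (M : EuclideanSpace ℝ (Fin n) →L[ℝ] EuclideanSpace ℝ (Fin n))
    (hMsym : ∀ x y, ⟪M x, y⟫ = ⟪x, M y⟫)
    (hMpos : ∀ x, x ≠ 0 → 0 < ⟪M x, x⟫) :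
    (∀ ε > 0, ∃ δ > 0, ∀ p : ℝ → EuclideanSpace ℝ (Fin n),
      (∀ t, HasDerivAt p (M (gradient c (p t))) t) →
      ‖p 0 - pstar‖ < δ → ∀ t ≥ (0:ℝ), ‖p t - pstar‖ < ε) ∧
    (∀ p : ℝ → EuclideanSpace ℝ (Fin n),
      (∀ t, HasDerivAt p (M (gradient c (p t))) t) →
      Tendsto p atTop (nhds pstar)) := by
  classical
  obtain ⟨lam, hlam, hcoer⟩ := aux_coercive M hMpos
  set a : ℝ := lam / κ with ha
  have ha0 : 0 < a := div_pos hlam hκ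
  have hdiffc : Differentiable ℝ c := hc.differentiable one_ne_zero
  set V : EuclideanSpace ℝ (Fin n) → ℝ := fun q => c pstar - c q with hV
  have hV0 : ∀ q, 0 ≤ V q := fun q => sub_nonneg.2 (hmax q)
  have hVκ : ∀ q, V q ≤ κ * ‖gradient c q‖ ^ 2 := by
    intro q
    have := hineq q
    simp only [hV]
    nlinarith [this]
  -- strict maximum
  have hstrict : ∀ q, q ≠ pstar → c q < c pstar := by
    intro q hq
    rcases lt_or_eq_of_le (hmax q) with h | h
    · exact h
    · exfalso
      have hloc : IsLocalMax c q := Filter.Eventually.of_forall fun x => h ▸ hmax x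
      have hfd : fderiv ℝ c q = 0 := hloc.fderiv_eq_zero
      have hg : gradient c q = 0 := by
        rw [gradient, hfd]; simp
      exact hq ((hcrit q).1 hg)
  -- Lemma A : small V implies close to pstar
  have hA : ∀ ε > (0:ℝ), ∃ η > (0:ℝ), ∀ q, V q < η → ‖q - pstar‖ < ε := by
    intro ε hε
    set K : Set (EuclideanSpace ℝ (Fin n)) :=
      {q | c pstar - 1 ≤ c q ∧ ε ≤ ‖q - pstar‖} with hK
    have hKclosed : IsClosed K := by
      apply IsClosed.inter
      · exact isClosed_le continuous_const (hc.continuous)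
      · exact isClosed_le continuous_const ((continuous_id.sub continuous_const).norm)
    have hKbdd : Bornology.IsBounded K := by
      have hev : ∀ᶠ x in Bornology.cobounded (EuclideanSpace ℝ (Fin n)),
          c x < c pstar - 1 := hrad.eventually (eventually_lt_atBot (c pstar - 1))
      have : Bornology.IsBounded {x | ¬ c x < c pstar - 1} := by
        rw [Bornology.isBounded_def]
        have hcompl : {x | ¬ c x < c pstar - 1}ᶜ = {x | c x < c pstar - 1} := by
          ext x
          simp only [Set.mem_compl_iff, Set.mem_setOf_eq, not_not]
        rw [hcompl]
        exact hev
      apply this.subset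
      intro q hq
      simp only [Set.mem_setOf_eq, not_lt]
      exact hq.1
    have hKcompact : IsCompact K := Metric.isCompact_of_isClosed_isBounded hKclosed hKbdd
    rcases K.eq_empty_or_nonempty with hKe | hKne
    · refine ⟨1, one_pos, fun q hq => ?_⟩
      by_contra hcon
      push_neg at hcon
      have : q ∈ K := ⟨by simp only [hV] at hq; linarith, hcon⟩
      rw [hKe] at this; exact this
    · obtain ⟨q0, hq0K, hq0max⟩ := hKcompact.exists_isMaxOn hKne hc.continuous.continuousOn
      have hq0ne : q0 ≠ pstar := by
        intro h
        have := hq0K.2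
        rw [h] at this
        simp at this
        linarith
      have hq0lt : c q0 < c pstar := hstrict q0 hq0ne
      refine ⟨min 1 (c pstar - c q0), lt_min one_pos (by linarith), fun q hq => ?_⟩
      by_contra hcon
      push_neg at hcon
      have hq1 : V q < 1 := lt_of_lt_of_le hq (min_le_left _ _)
      have hqK : q ∈ K := ⟨by simp only [hV] at hq1; linarith, hcon⟩
      have := isMaxOn_iff.1 hq0max q hqK
      have hq2 : V q < c pstar - c q0 := lt_of_lt_of_le hq (min_le_right _ _)
      simp only [hV] at hq2
      linarith
  -- decay along trajectories
  have hdecay : ∀ p : ℝ → EuclideanSpace ℝ (Fin n),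
      (∀ t, HasDerivAt p (M (gradient c (p t))) t) →
      ∀ t ≥ (0:ℝ), V (p t) ≤ Real.exp (-(a * t)) * V (p 0) := by
    intro p hp t ht
    set W : ℝ → ℝ := fun s => Real.exp (a * s) * V (p s) with hW
    have hWderiv : ∀ s, HasDerivAt W
        (a * Real.exp (a * s) * V (p s) +
          Real.exp (a * s) * (-⟪gradient c (p s), M (gradient c (p s))⟫)) s := by
      intro s
      have hgrad : HasGradientAt c (gradient c (p s)) (p s) :=
        (hdiffc (p s)).hasGradientAt
      have hfd : HasFDerivAt c
          ((InnerProductSpace.toDual ℝ (EuclideanSpace ℝ (Fin n))) (gradient c (p s))) (p s) :=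
        hgrad.hasFDerivAt
      have hcp : HasDerivAt (fun u => c (p u))
          (⟪gradient c (p s), M (gradient c (p s))⟫) s := by
        have := hfd.comp_hasDerivAt s (hp s)
        simpa only [InnerProductSpace.toDual_apply_apply, Function.comp_def] using this
      have hVp : HasDerivAt (fun u => V (p u))
          (-⟪gradient c (p s), M (gradient c (p s))⟫) s := by
        exact hcp.const_sub (c pstar)
      have hexp : HasDerivAt (fun u => Real.exp (a * u)) (Real.exp (a * s) * a) s := by
        have h1 : HasDerivAt (fun u : ℝ => a * u) a s := by
          simpa using (hasDerivAt_id s).const_mul a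
        exact (Real.hasDerivAt_exp (a * s)).comp s h1
      exact (hexp.mul hVp).congr_deriv (by ring)
    have hWd : ∀ s, deriv W s ≤ 0 := by
      intro s
      rw [(hWderiv s).deriv]
      have hg := gradient c (p s)
      set g := gradient c (p s) with hgdef
      have h1 : a * V (p s) ≤ lam * ‖g‖ ^ 2 := by
        have := hVκ (p s)
        have : a * V (p s) ≤ a * (κ * ‖g‖ ^ 2) :=
          mul_le_mul_of_nonneg_left this (le_of_lt ha0)
        calc a * V (p s) ≤ a * (κ * ‖g‖ ^ 2) := this
          _ = lam * ‖g‖ ^ 2 := by rw [ha]; field_simp [hκ.ne']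
      have h2 : lam * ‖g‖ ^ 2 ≤ ⟪M g, g⟫ := hcoer g
      have h3 : ⟪g, M g⟫ = ⟪M g, g⟫ := real_inner_comm _ _
      have hexp0 : (0:ℝ) < Real.exp (a * s) := Real.exp_pos _
      have : a * V (p s) - ⟪g, M g⟫ ≤ 0 := by rw [h3]; linarith
      nlinarith [this, hexp0]
    have hWdiff : Differentiable ℝ W := fun s => (hWderiv s).differentiableAt
    have hanti : Antitone W := by
      apply antitone_of_deriv_nonpos hWdiff hWd
    have hle : W t ≤ W 0 := hanti ht
    simp only [hW, mul_zero, Real.exp_zero, one_mul] at hle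
    have hexp0 : (0:ℝ) < Real.exp (a * t) := Real.exp_pos _
    rw [Real.exp_neg]
    have := mul_le_mul_of_nonneg_left hle (le_of_lt (inv_pos.2 hexp0))
    calc V (p t) = (Real.exp (a * t))⁻¹ * (Real.exp (a * t) * V (p t)) := by
          field_simp
      _ ≤ (Real.exp (a * t))⁻¹ * V (p 0) := this
  constructor
  · -- stability
    intro ε hε
    obtain ⟨η, hη, hηA⟩ := hA ε hε
    have hcontV : ContinuousAt V pstar := (continuous_const.sub hc.continuous).continuousAt
    have hVp : V pstar = 0 := by simp [hV]
    obtain ⟨δ, hδ, hδV⟩ := Metric.continuousAt_iff.1 hcontV η hη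
    refine ⟨δ, hδ, fun p hp hp0 t ht => ?_⟩
    have h1 : V (p 0) < η := by
      have := hδV (x := p 0) (by rwa [dist_eq_norm])
      rwa [hVp, dist_zero_right, Real.norm_eq_abs, abs_of_nonneg (hV0 _)] at this
    have h2 : V (p t) ≤ Real.exp (-(a * t)) * V (p 0) := hdecay p hp t ht
    have h3 : Real.exp (-(a * t)) ≤ 1 := Real.exp_le_one_iff.2 (by nlinarith)
    have h4 : V (p t) < η := by
      nlinarith [hV0 (p 0), hV0 (p t)]
    exact hηA (p t) h4
  · -- attractivity
    intro p hp
    rw [Metric.tendsto_atTop]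
    intro ε hε
    obtain ⟨η, hη, hηA⟩ := hA ε hε
    have htend : Tendsto (fun t => Real.exp (-(a * t)) * V (p 0)) atTop (nhds 0) := by
      have h1 : Tendsto (fun t : ℝ => -(a * t)) atTop atBot := by
        have : Tendsto (fun t : ℝ => a * t) atTop atTop :=
          Tendsto.const_mul_atTop ha0 tendsto_id
        exact tendsto_neg_atBot_iff.2 this
      have h2 : Tendsto (fun t => Real.exp (-(a * t))) atTop (nhds 0) :=
        Real.tendsto_exp_atBot.comp h1
      simpa using h2.mul_const (V (p 0))
    have hev : ∀ᶠ t in atTop, Real.exp (-(a * t)) * V (p 0) < η :=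
      htend.eventually (eventually_lt_nhds hη)
    obtain ⟨N, hN⟩ := (eventually_atTop.1 hev)
    refine ⟨max N 0, fun t ht => ?_⟩
    have ht0 : (0:ℝ) ≤ t := le_trans (le_max_right N 0) ht
    have htN : N ≤ t := le_trans (le_max_left N 0) ht
    have h2 : V (p t) ≤ Real.exp (-(a * t)) * V (p 0) := hdecay p hp t ht0
    have h4 : V (p t) < η := lt_of_le_of_lt h2 (hN t htN)
    have := hηA (p t) h4
    rwa [dist_eq_norm]
end
end

section
/- With f(z, τ) = √2·exp((τ − z)ê₃)·e₁ (i.e., the planar case σ = 0), the averaged quantity α_{ij} = (1/2π)∫₀^{2π} ( (∂f_i/∂z)·∫₀^τ f_j ds − (∫₀^τ (∂f_i/∂z) ds)·f_j ) dτ yields the 2×2 upper-left block of the matrix with α₁₁ = α₂₂ and α₁₂ = −α₂₁... specifically, the symmetric part of the matrix (α_{ij}) is positive semidefinite and nonzero. -/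
open Matrix Real

noncomputable section

/-- The hat map sending `Ω ∈ ℝ³` to the skew-symmetric matrix of the cross product with `Ω`. -/
def hat (v : Fin 3 → ℝ) : Matrix (Fin 3) (Fin 3) ℝ :=
  !![0, -v 2, v 1; v 2, 0, -v 0; -v 1, v 0, 0]

/-- Standard basis vectors of `ℝ³`. -/
def e (i : Fin 3) : Fin 3 → ℝ := Pi.single i 1

/-- The planar (σ = 0) oscillatory velocity field `f(z,τ) = √2·exp((τ−z)ê₃)·e₁`. -/
def fplanar (z τ : ℝ) : Fin 3 → ℝ :=
  Real.sqrt 2 • (NormedSpace.exp ((τ - z) • hat (e 2))).mulVec (e 0)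

/-- `∂f/∂z`, componentwise. -/
def fplanarz (z τ : ℝ) : Fin 3 → ℝ := fun i => deriv (fun z' => fplanar z' τ i) z

/-- The second-order averaging coefficients
`α_{ij} = (1/2π)∫₀^{2π} ( (∂f_i/∂z)·∫₀^τ f_j − (∫₀^τ ∂f_i/∂z)·f_j ) dτ`. -/
def alphaMat (z : ℝ) : Matrix (Fin 3) (Fin 3) ℝ :=
  Matrix.of fun i j =>
    (1/(2*π)) * ∫ τ in (0:ℝ)..(2*π),
      (fplanarz z τ i * ∫ s in (0:ℝ)..τ, fplanar z s j) -
        (∫ s in (0:ℝ)..τ, fplanarz z s i) * fplanar z τ j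

/-! ### Auxiliary machinery: the matrix exponential of the planar rotation generator -/

/-- The ring homomorphism `ℂ × ℝ → M₃(ℝ)` realizing the block decomposition used to
compute `exp` of the rotation generator. -/
def phi : (ℂ × ℝ) →+* Matrix (Fin 3) (Fin 3) ℝ where
  toFun p := !![p.1.re, -p.1.im, 0; p.1.im, p.1.re, 0; 0, 0, p.2]
  map_one' := by ext i j; fin_cases i <;> fin_cases j <;> simp [Matrix.one_apply, vecHead, vecTail]
  map_mul' p q := by
    ext i j; fin_cases i <;> fin_cases j <;>
      simp [Matrix.mul_apply, Fin.sum_univ_three, Complex.mul_re, Complex.mul_im, vecHead,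
        vecTail] <;> ring
  map_zero' := by ext i j; fin_cases i <;> fin_cases j <;> simp [vecHead, vecTail]
  map_add' p q := by ext i j; fin_cases i <;> fin_cases j <;> simp [vecHead, vecTail] <;> ring

lemma phi_cont : Continuous phi := by
  apply continuous_matrix
  intro i j
  fin_cases i <;> fin_cases j <;> simp [phi] <;> fun_prop

lemma exp_prod (x : ℂ × ℝ) :
    NormedSpace.exp x = (NormedSpace.exp x.1, NormedSpace.exp x.2) :=
  Prod.ext (Prod.fst_exp x) (Prod.snd_exp x)

attribute [local instance] Matrix.linftyOpNormedRing Matrix.linftyOpNormedAlgebra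

lemma exp_formula (t : ℝ) :
    NormedSpace.exp (!![0, -t, 0; t, 0, 0; 0, 0, 0] : Matrix (Fin 3) (Fin 3) ℝ) =
      !![Real.cos t, -Real.sin t, 0; Real.sin t, Real.cos t, 0; 0, 0, 1] := by
  have h1 : (!![0, -t, 0; t, 0, 0; 0, 0, 0] : Matrix (Fin 3) (Fin 3) ℝ)
      = phi (t * Complex.I, 0) := by
    ext i j; fin_cases i <;> fin_cases j <;> simp [phi, vecHead, vecTail]
  rw [h1]; erw [← NormedSpace.map_exp phi phi_cont, exp_prod]
  have h2 : NormedSpace.exp ((t : ℂ) * Complex.I) = Complex.exp (t * Complex.I) := by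
    rw [Complex.exp_eq_exp_ℂ]
  have h3 : NormedSpace.exp (0 : ℝ) = 1 := NormedSpace.exp_zero
  ext i j; fin_cases i <;> fin_cases j <;>
    simp [phi, h2, h3, Complex.exp_mul_I, Complex.add_re, Complex.add_im, vecHead, vecTail,
      Complex.cos_ofReal_re, Complex.sin_ofReal_re, Complex.sin_ofReal_im]

lemma fplanar_apply (z τ : ℝ) :
    fplanar z τ = ![Real.sqrt 2 * Real.cos (τ - z), Real.sqrt 2 * Real.sin (τ - z), 0] := by
  have h : (τ - z) • hat (e 2) = !![0, -(τ-z), 0; (τ-z), 0, 0; 0, 0, 0] := by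
    ext i j; fin_cases i <;> fin_cases j <;> simp [hat, e, vecHead, vecTail, Pi.single]
  rw [fplanar, h, exp_formula]
  ext i; fin_cases i <;>
    simp [Matrix.mulVec, dotProduct, Fin.sum_univ_three, e, Pi.single, vecHead, vecTail]

lemma fplanarz_apply (z τ : ℝ) :
    fplanarz z τ = ![Real.sqrt 2 * Real.sin (τ - z), -(Real.sqrt 2 * Real.cos (τ - z)), 0] := by
  have hd : HasDerivAt (fun z' : ℝ => τ - z') (-1) z := by
    simpa using (hasDerivAt_id' z).const_sub τ
  ext i; fin_cases i
  · show deriv (fun z' => fplanar z' τ 0) z = _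
    have : (fun z' => fplanar z' τ 0) = fun z' => Real.sqrt 2 * Real.cos (τ - z') := by
      funext z'; rw [fplanar_apply]; simp
    rw [this]
    have := (((Real.hasDerivAt_cos (τ - z)).comp z hd).const_mul (Real.sqrt 2)).deriv
    simpa using this
  · show deriv (fun z' => fplanar z' τ 1) z = _
    have : (fun z' => fplanar z' τ 1) = fun z' => Real.sqrt 2 * Real.sin (τ - z') := by
      funext z'; rw [fplanar_apply]; simp
    rw [this]
    have := (((Real.hasDerivAt_sin (τ - z)).comp z hd).const_mul (Real.sqrt 2)).deriv
    simpa using this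
  · show deriv (fun z' => fplanar z' τ 2) z = _
    have : (fun z' => fplanar z' τ 2) = fun _ => (0:ℝ) := by
      funext z'; rw [fplanar_apply]; simp
    rw [this]; simp

lemma int_f0 (z τ : ℝ) : ∫ s in (0:ℝ)..τ, fplanar z s 0
    = Real.sqrt 2 * (Real.sin (τ - z) - Real.sin (0 - z)) := by
  have : (fun s => fplanar z s 0) = fun s => Real.sqrt 2 * Real.cos (s - z) := by
    funext s; rw [fplanar_apply]; simp
  rw [this, intervalIntegral.integral_const_mul,
    intervalIntegral.integral_comp_sub_right (fun x => Real.cos x) z,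
    integral_cos]

lemma int_f1 (z τ : ℝ) : ∫ s in (0:ℝ)..τ, fplanar z s 1
    = Real.sqrt 2 * (Real.cos (0 - z) - Real.cos (τ - z)) := by
  have : (fun s => fplanar z s 1) = fun s => Real.sqrt 2 * Real.sin (s - z) := by
    funext s; rw [fplanar_apply]; simp
  rw [this, intervalIntegral.integral_const_mul,
    intervalIntegral.integral_comp_sub_right (fun x => Real.sin x) z,
    integral_sin]

lemma int_f2 (z τ : ℝ) : ∫ s in (0:ℝ)..τ, fplanar z s 2 = 0 := by
  have : (fun s => fplanar z s 2) = fun _ => (0:ℝ) := by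
    funext s; rw [fplanar_apply]; simp
  rw [this]; simp

lemma int_fz0 (z τ : ℝ) : ∫ s in (0:ℝ)..τ, fplanarz z s 0
    = Real.sqrt 2 * (Real.cos (0 - z) - Real.cos (τ - z)) := by
  have : (fun s => fplanarz z s 0) = fun s => Real.sqrt 2 * Real.sin (s - z) := by
    funext s; rw [fplanarz_apply]; simp
  rw [this, intervalIntegral.integral_const_mul,
    intervalIntegral.integral_comp_sub_right (fun x => Real.sin x) z,
    integral_sin]

lemma int_fz1 (z τ : ℝ) : ∫ s in (0:ℝ)..τ, fplanarz z s 1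
    = -(Real.sqrt 2 * (Real.sin (τ - z) - Real.sin (0 - z))) := by
  have : (fun s => fplanarz z s 1) = fun s => -(Real.sqrt 2 * Real.cos (s - z)) := by
    funext s; rw [fplanarz_apply]; simp
  rw [this, intervalIntegral.integral_neg, intervalIntegral.integral_const_mul,
    intervalIntegral.integral_comp_sub_right (fun x => Real.cos x) z,
    integral_cos]

lemma int_fz2 (z τ : ℝ) : ∫ s in (0:ℝ)..τ, fplanarz z s 2 = 0 := by
  have : (fun s => fplanarz z s 2) = fun _ => (0:ℝ) := by
    funext s; rw [fplanarz_apply]; simp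
  rw [this]; simp

lemma diag_integrand (z τ : ℝ) :
    Real.sqrt 2 * Real.sin (τ - z) * (Real.sqrt 2 * (Real.sin (τ - z) - Real.sin (0 - z))) -
      Real.sqrt 2 * (Real.cos (0 - z) - Real.cos (τ - z)) * (Real.sqrt 2 * Real.cos (τ - z))
    = 2 - 2 * Real.cos τ := by
  have h2 : Real.sqrt 2 * Real.sqrt 2 = 2 := Real.mul_self_sqrt (by norm_num)
  have h1 : Real.sin (τ - z) ^ 2 + Real.cos (τ - z) ^ 2 = 1 := Real.sin_sq_add_cos_sq _
  have hcos : Real.cos τ = Real.cos (τ - z) * Real.cos z - Real.sin (τ - z) * Real.sin z := by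
    have := Real.cos_add (τ - z) z
    rw [sub_add_cancel] at this
    exact this
  simp only [zero_sub, Real.sin_neg, Real.cos_neg]
  linear_combination (Real.sin (τ - z) * (Real.sin (τ - z) + Real.sin z)
      - (Real.cos z - Real.cos (τ - z)) * Real.cos (τ - z)) * h2 + 2 * h1 + 2 * hcos

lemma int_diag : ∫ τ in (0:ℝ)..(2*π), (2 - 2 * Real.cos τ) = 4 * π := by
  rw [intervalIntegral.integral_sub intervalIntegrable_const
      ((continuous_const.mul Real.continuous_cos).intervalIntegrable _ _ :
        IntervalIntegrable (fun τ => 2 * Real.cos τ) _ _ _) (g := fun τ => 2 * Real.cos τ),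
    intervalIntegral.integral_const, intervalIntegral.integral_const_mul, integral_cos]
  simp [Real.sin_two_pi]
  ring

lemma alpha_diag0 (z : ℝ) : alphaMat z 0 0 = 2 := by
  have hπ : π ≠ 0 := Real.pi_ne_zero
  have h : Set.EqOn (fun τ => (fplanarz z τ 0 * ∫ s in (0:ℝ)..τ, fplanar z s 0) -
      (∫ s in (0:ℝ)..τ, fplanarz z s 0) * fplanar z τ 0)
      (fun τ => 2 - 2 * Real.cos τ) (Set.uIcc 0 (2*π)) := by
    intro τ _
    simp only [int_f0, int_fz0]
    simp only [fplanarz_apply, fplanar_apply, Matrix.cons_val_zero]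
    linear_combination diag_integrand z τ
  show (1/(2*π)) * _ = 2
  rw [intervalIntegral.integral_congr h, int_diag]
  field_simp; ring

lemma alpha_diag1 (z : ℝ) : alphaMat z 1 1 = 2 := by
  have hπ : π ≠ 0 := Real.pi_ne_zero
  have h : Set.EqOn (fun τ => (fplanarz z τ 1 * ∫ s in (0:ℝ)..τ, fplanar z s 1) -
      (∫ s in (0:ℝ)..τ, fplanarz z s 1) * fplanar z τ 1)
      (fun τ => 2 - 2 * Real.cos τ) (Set.uIcc 0 (2*π)) := by
    intro τ _
    simp only [int_f1, int_fz1]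
    simp only [fplanarz_apply, fplanar_apply, Matrix.cons_val_one, Matrix.head_cons,
      Matrix.cons_val_zero]
    linear_combination diag_integrand z τ
  show (1/(2*π)) * _ = 2
  rw [intervalIntegral.integral_congr h, int_diag]
  field_simp; ring

lemma alpha_zero (z : ℝ) (i j : Fin 3) (hij : ¬(i = j ∧ i ≠ 2)) : alphaMat z i j = 0 := by
  have h : Set.EqOn (fun τ => (fplanarz z τ i * ∫ s in (0:ℝ)..τ, fplanar z s j) -
      (∫ s in (0:ℝ)..τ, fplanarz z s i) * fplanar z τ j)
      (fun _ => (0:ℝ)) (Set.uIcc 0 (2*π)) := by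
    intro τ _
    fin_cases i <;> fin_cases j <;> simp_all <;>
      · simp only [int_f0, int_f1, int_f2, int_fz0, int_fz1, int_fz2]
        simp only [fplanarz_apply, fplanar_apply, Matrix.cons_val_zero, Matrix.cons_val_one,
          Matrix.head_cons, Matrix.cons_val_two, Matrix.tail_cons]
        ring
  show (1/(2*π)) * _ = 0
  rw [intervalIntegral.integral_congr h, intervalIntegral.integral_zero, mul_zero]

lemma alphaMat_eq (z : ℝ) : alphaMat z = !![2, 0, 0; 0, 2, 0; 0, 0, 0] := by
  ext i j
  fin_cases i <;> fin_cases j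
  · simpa using alpha_diag0 z
  · simpa using alpha_zero z 0 1 (by simp)
  · simpa using alpha_zero z 0 2 (by simp)
  · simpa using alpha_zero z 1 0 (by simp)
  · simpa using alpha_diag1 z
  · simpa using alpha_zero z 1 2 (by simp)
  · simpa using alpha_zero z 2 0 (by simp)
  · simpa using alpha_zero z 2 1 (by simp)
  · simpa using alpha_zero z 2 2 (by simp)

/-- The symmetric part of the averaged matrix `(α_{ij})` is positive semidefinite and nonzero. -/
theorem alphaMat_symm_posSemidef (z : ℝ) :
    (((1:ℝ)/2) • (alphaMat z + (alphaMat z)ᵀ)).PosSemidef ∧ alphaMat z ≠ 0 := by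
  rw [alphaMat_eq]
  constructor
  · have hC : ((1:ℝ)/2) • ((!![2, 0, 0; 0, 2, 0; 0, 0, 0] : Matrix (Fin 3) (Fin 3) ℝ) +
        (!![2, 0, 0; 0, 2, 0; 0, 0, 0] : Matrix (Fin 3) (Fin 3) ℝ)ᵀ)
        = !![2, 0, 0; 0, 2, 0; 0, 0, 0] := by
      ext i j; fin_cases i <;> fin_cases j <;>
        simp [Matrix.transpose, vecHead, vecTail] <;> norm_num
    rw [hC]
    refine Matrix.PosSemidef.of_dotProduct_mulVec_nonneg ?_ ?_
    · ext i j; fin_cases i <;> fin_cases j <;>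
        simp [Matrix.conjTranspose_apply, vecHead, vecTail]
    · intro x
      have : star x ⬝ᵥ (!![2, 0, 0; 0, 2, 0; 0, 0, 0] : Matrix (Fin 3) (Fin 3) ℝ) *ᵥ x
          = 2 * x 0 ^ 2 + 2 * x 1 ^ 2 := by
        simp [Matrix.mulVec, dotProduct, Fin.sum_univ_three, vecHead, vecTail]
        ring
      rw [this]; positivity
  · intro hcontra
    have := congrFun (congrFun hcontra 0) 0
    simp at this
end
end
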